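/- Let k ≥ 1 and 0 < s ≤ 1. There exists a constant A > 0, depending only on k and s, such that the following holds. Let u, v : B(0,3) → ℝ be continuous functions on the open ball B(0,3) ⊆ ℂ^k such that u, v, and v − u are all plurisubharmonic. Then for every 0 < r ≤ 1/2 one has m_{B(0,1)}(u, r) ≤ m_{B(0,2)}(v, r^s) + A · m_{B(0,2)}(u, r^s) · r^{1−s}, and in particular m_{B(0,1)}(u, r) ≤ m_{B(0,2)}(v, r^s) + A · Ω_{B(0,2)}(u) · r^{1−s}. -/

import Mathlib

open Metric

/-- A continuous function `u` on `Ω ⊆ ℂ^k` is plurisubharmonic if it satisfies the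
sub-mean value inequality on every complex line: whenever the closed disc
`{a + z • b : |z - z₀| ≤ ρ}` is contained in `Ω`, the value at the center is at most the
mean value on the boundary circle. -/
def IsPshOn {k : ℕ} (Ω : Set (EuclideanSpace ℂ (Fin k)))
    (u : EuclideanSpace ℂ (Fin k) → ℝ) : Prop :=
  ∀ (a b : EuclideanSpace ℂ (Fin k)) (z₀ : ℂ) (ρ : ℝ), 0 < ρ →
    (∀ z : ℂ, ‖z - z₀‖ ≤ ρ → a + z • b ∈ Ω) →
    u (a + z₀ • b) ≤ (1 / (2 * Real.pi)) *
      ∫ θ in (0:ℝ)..(2 * Real.pi),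
        u (a + (z₀ + (ρ : ℂ) * Complex.exp ((θ : ℂ) * Complex.I)) • b)

/-- The modulus of continuity `m_U(g, r) = sup {|g x - g y| : x, y ∈ U, dist x y ≤ r}`. -/
noncomputable def modCont {X : Type*} [PseudoMetricSpace X] (U : Set X) (g : X → ℝ)
    (r : ℝ) : ℝ :=
  sSup {t : ℝ | ∃ x ∈ U, ∃ y ∈ U, dist x y ≤ r ∧ t = |g x - g y|}

/-- The oscillation `Ω_U(g) = sup_U g - inf_U g = sup {|g x - g y| : x, y ∈ U}`. -/
noncomputable def oscOn {X : Type*} [PseudoMetricSpace X] (U : Set X) (g : X → ℝ) : ℝ :=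
  sSup {t : ℝ | ∃ x ∈ U, ∃ y ∈ U, t = |g x - g y|}


open MeasureTheory Set
open scoped Real

lemma translate_ball_integral (f : ℂ → ℝ) (c : ℂ) (ρ : ℝ) :
    ∫ z in ball c ρ, f z = ∫ w in ball (0:ℂ) ρ, f (c + w) := by
  rw [← integral_indicator measurableSet_ball, ← integral_indicator measurableSet_ball,
    ← MeasureTheory.integral_add_left_eq_self c
      (f := fun z => (ball c ρ).indicator f z)]
  congr 1
  ext w
  by_cases h : w ∈ ball (0:ℂ) ρ
  · have h' : c + w ∈ ball c ρ := by
      simpa [mem_ball, dist_eq_norm] using (mem_ball_zero_iff.mp h)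
    simp [Set.indicator_of_mem h, Set.indicator_of_mem h']
  · have h' : c + w ∉ ball c ρ := by
      intro hc; apply h
      rw [mem_ball_zero_iff]
      simpa [mem_ball, dist_eq_norm] using hc
    simp [Set.indicator_of_notMem h, Set.indicator_of_notMem h']

lemma polar_ball_integral (g : ℂ → ℝ) (ρ : ℝ) (hρ : 0 < ρ)
    (hg : ContinuousOn g (closedBall (0:ℂ) ρ)) :
    ∫ w in ball (0:ℂ) ρ, g w
      = ∫ p in Ioo (0:ℝ) ρ ×ˢ Ioo (-π) π, p.1 * g (Complex.polarCoord.symm p) := by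
  have key := Complex.integral_comp_polarCoord_symm ((ball (0:ℂ) ρ).indicator g)
  rw [integral_indicator measurableSet_ball] at key
  rw [← key]
  rw [setIntegral_congr_fun (polarCoord.open_target.measurableSet)
    (g := (Ioo (0:ℝ) ρ ×ˢ Ioo (-π) π).indicator
      (fun p => p.1 * g (Complex.polarCoord.symm p)))]
  · rw [integral_indicator ((measurableSet_Ioo).prod measurableSet_Ioo)]
    rw [Measure.restrict_restrict ((measurableSet_Ioo).prod measurableSet_Ioo)]
    congr 1
    rw [polarCoord_target, Set.prod_inter_prod,
      Set.inter_eq_self_of_subset_left Ioo_subset_Ioi_self, Set.inter_self]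
  · intro p hp
    rw [polarCoord_target] at hp
    obtain ⟨hp1, hp2⟩ := hp
    have habs : ‖(Complex.polarCoord.symm p : ℂ)‖ = p.1 := by
      rw [Complex.norm_polarCoord_symm, abs_of_pos hp1]
    by_cases h : p.1 < ρ
    · have hmem : Complex.polarCoord.symm p ∈ ball (0:ℂ) ρ :=
        mem_ball_zero_iff.mpr (habs ▸ h)
      have hmem2 : p ∈ Ioo (0:ℝ) ρ ×ˢ Ioo (-π) π := ⟨⟨hp1, h⟩, hp2⟩
      simp only [Set.indicator_of_mem hmem, Set.indicator_of_mem hmem2, smul_eq_mul]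
    · have hmem : Complex.polarCoord.symm p ∉ ball (0:ℂ) ρ := by
        rw [mem_ball_zero_iff, habs]; exact h
      have hmem2 : p ∉ Ioo (0:ℝ) ρ ×ˢ Ioo (-π) π := by
        intro hc; exact h hc.1.2
      simp only [Set.indicator_of_notMem hmem, Set.indicator_of_notMem hmem2,
        smul_zero]

lemma submean_ball (f : ℂ → ℝ) (c : ℂ) (ρ : ℝ) (hρ : 0 < ρ)
    (hf : ContinuousOn f (closedBall c ρ))
    (hsm : ∀ t : ℝ, 0 < t → t ≤ ρ →
      f c ≤ (1 / (2 * π)) * ∫ θ in (0:ℝ)..(2*π),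
        f (c + (t:ℂ) * Complex.exp ((θ:ℂ) * Complex.I))) :
    f c * (π * ρ^2) ≤ ∫ z in ball c ρ, f z := by
  set g : ℂ → ℝ := fun w => f (c + w) with hgdef
  have hg : ContinuousOn g (closedBall (0:ℂ) ρ) := by
    apply hf.comp (continuous_const.add continuous_id).continuousOn
    intro w hw
    rw [mem_closedBall_zero_iff] at hw
    simpa [mem_closedBall, dist_eq_norm] using hw
  have hsymm : Continuous (fun p : ℝ × ℝ => (Complex.polarCoord.symm p : ℂ)) := by
    simp only [Complex.polarCoord_symm_apply]
    continuity
  set F : ℝ × ℝ → ℝ := fun p => p.1 * g (Complex.polarCoord.symm p) with hFdef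
  have hFcont : ContinuousOn F (Icc (0:ℝ) ρ ×ˢ Icc (-π) π) := by
    apply (continuous_fst.continuousOn).mul
    apply hg.comp hsymm.continuousOn
    intro p hp
    rw [mem_closedBall_zero_iff, Complex.norm_polarCoord_symm]
    rw [abs_of_nonneg hp.1.1]
    exact hp.1.2
  have hFint : IntegrableOn F (Ioo (0:ℝ) ρ ×ˢ Ioo (-π) π) :=
    (hFcont.integrableOn_compact (isCompact_Icc.prod isCompact_Icc)).mono_set
      (Set.prod_mono Ioo_subset_Icc_self Ioo_subset_Icc_self)
  have hmarg : IntegrableOn (fun t => ∫ θ in Ioo (-π) π, F (t, θ)) (Ioo (0:ℝ) ρ) := by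
    have h2 := hFint
    rw [IntegrableOn, Measure.volume_eq_prod, ← Measure.prod_restrict] at h2
    exact h2.integral_prod_left
  have hinner : ∀ t ∈ Ioo (0:ℝ) ρ,
      ∫ θ in Ioo (-π) π, F (t, θ)
        = t * ∫ θ in (0:ℝ)..(2*π), f (c + (t:ℂ) * Complex.exp ((θ:ℂ) * Complex.I)) := by
    intro t ht
    set φ : ℝ → ℝ := fun θ => f (c + (t:ℂ) * Complex.exp ((θ:ℂ) * Complex.I)) with hφdef
    have hFφ : ∀ θ : ℝ, F (t, θ) = t * φ θ := by
      intro θ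
      simp only [hFdef, hgdef, hφdef, Complex.polarCoord_symm_apply, Complex.exp_mul_I]
      push_cast
      ring_nf
    have hper : Function.Periodic φ (2*π) := by
      intro θ
      simp only [hφdef]
      congr 2
      push_cast
      rw [add_mul, Complex.exp_add]
      rw [show ((2:ℂ) * π * Complex.I) = 2 * π * Complex.I by ring, Complex.exp_two_pi_mul_I]
      ring
    calc ∫ θ in Ioo (-π) π, F (t, θ) = ∫ θ in Ioo (-π) π, t * φ θ := by
          simp_rw [hFφ]
      _ = t * ∫ θ in Ioo (-π) π, φ θ := by rw [integral_const_mul]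
      _ = t * ∫ θ in (-π)..π, φ θ := by
          rw [intervalIntegral.integral_of_le (by linarith [Real.pi_pos]),
            integral_Ioc_eq_integral_Ioo]
      _ = t * ∫ θ in (0:ℝ)..(2*π), φ θ := by
          have := hper.intervalIntegral_add_eq (-π) 0
          rw [show -π + 2*π = π by ring, show (0:ℝ) + 2*π = 2*π by ring] at this
          rw [this]
  have hpt : ∀ t ∈ Ioo (0:ℝ) ρ, 2 * π * f c * t ≤ ∫ θ in Ioo (-π) π, F (t, θ) := by
    intro t ht
    rw [hinner t ht]
    have h1 := hsm t ht.1 ht.2.le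
    have h2 : 2 * π * f c ≤ ∫ θ in (0:ℝ)..(2*π),
        f (c + (t:ℂ) * Complex.exp ((θ:ℂ) * Complex.I)) := by
      have hπ : 0 < 2 * π := by positivity
      calc 2 * π * f c ≤ 2 * π * ((1 / (2 * π)) * ∫ θ in (0:ℝ)..(2*π),
            f (c + (t:ℂ) * Complex.exp ((θ:ℂ) * Complex.I))) :=
            by exact mul_le_mul_of_nonneg_left h1 hπ.le
        _ = _ := by rw [← mul_assoc, mul_one_div_cancel hπ.ne', one_mul]
    calc 2 * π * f c * t = t * (2 * π * f c) := by ring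
      _ ≤ t * _ := mul_le_mul_of_nonneg_left h2 ht.1.le
  have hconst : IntegrableOn (fun t : ℝ => 2 * π * f c * t) (Ioo (0:ℝ) ρ) :=
    (((continuous_const.mul continuous_id).continuousOn).integrableOn_compact
      isCompact_Icc).mono_set Ioo_subset_Icc_self
  have hmono := setIntegral_mono_on hconst hmarg measurableSet_Ioo hpt
  have hval : ∫ t in Ioo (0:ℝ) ρ, 2 * π * f c * t = f c * (π * ρ^2) := by
    have : ∫ t in Ioo (0:ℝ) ρ, 2 * π * f c * t
        = 2 * π * f c * ∫ t in Ioo (0:ℝ) ρ, t := integral_const_mul _ _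
    rw [this, ← integral_Ioc_eq_integral_Ioo, ← intervalIntegral.integral_of_le hρ.le,
      integral_id]
    ring
  calc f c * (π * ρ^2) = ∫ t in Ioo (0:ℝ) ρ, 2 * π * f c * t := hval.symm
    _ ≤ ∫ t in Ioo (0:ℝ) ρ, ∫ θ in Ioo (-π) π, F (t, θ) := hmono
    _ = ∫ p in Ioo (0:ℝ) ρ ×ˢ Ioo (-π) π, F p := by
          have hFint' : IntegrableOn F (Ioo (0:ℝ) ρ ×ˢ Ioo (-π) π) (volume.prod volume) := by
            rwa [← Measure.volume_eq_prod]
          have hFub := setIntegral_prod F hFint'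
          rw [← Measure.volume_eq_prod] at hFub
          exact hFub.symm
    _ = ∫ w in ball (0:ℂ) ρ, g w := (polar_ball_integral g ρ hρ hg).symm
    _ = ∫ z in ball c ρ, f z := (translate_ball_integral f c ρ).symm
lemma le_modCont {X : Type*} [PseudoMetricSpace X] {U : Set X} {g : X → ℝ} {r : ℝ} {M : ℝ}
    (hM : ∀ p ∈ U, |g p| ≤ M) {x y : X} (hx : x ∈ U) (hy : y ∈ U) (hd : dist x y ≤ r) :
    |g x - g y| ≤ modCont U g r := by
  apply le_csSup
  · refine ⟨2 * M, ?_⟩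
    rintro t ⟨p, hp, q, hq, hpq, rfl⟩
    calc |g p - g q| ≤ |g p| + |g q| := abs_sub _ _
      _ ≤ M + M := add_le_add (hM p hp) (hM q hq)
      _ = 2 * M := by ring
  · exact ⟨x, hx, y, hy, hd, rfl⟩

lemma modCont_nonneg' {X : Type*} [PseudoMetricSpace X] {U : Set X} {g : X → ℝ} {r : ℝ} {M : ℝ}
    (hM : ∀ p ∈ U, |g p| ≤ M) {x : X} (hx : x ∈ U) (hr : 0 ≤ r) :
    0 ≤ modCont U g r :=
  le_trans (abs_nonneg _) (le_modCont hM hx hx (by simpa using hr))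

lemma modCont_le_oscOn {X : Type*} [PseudoMetricSpace X] {U : Set X} {g : X → ℝ} {r : ℝ} {M : ℝ}
    (hM : ∀ p ∈ U, |g p| ≤ M) {x : X} (hx : x ∈ U) (hr : 0 ≤ r) :
    modCont U g r ≤ oscOn U g := by
  apply csSup_le
  · exact ⟨0, x, hx, x, hx, by simpa using hr, by simp⟩
  rintro t ⟨p, hp, q, hq, hpq, rfl⟩
  apply le_csSup
  · refine ⟨2 * M, ?_⟩
    rintro t ⟨p', hp', q', hq', rfl⟩
    calc |g p' - g q'| ≤ |g p'| + |g q'| := abs_sub _ _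
      _ ≤ M + M := add_le_add (hM p' hp') (hM q' hq')
      _ = 2 * M := by ring
  · exact ⟨p, hp, q, hq, rfl⟩

lemma vol_ball_toReal (c : ℂ) (t : ℝ) (ht : 0 ≤ t) :
    (volume (ball c t)).toReal = π * t ^ 2 := by
  rw [Complex.volume_ball, ENNReal.toReal_mul, ENNReal.toReal_pow, ENNReal.toReal_ofReal ht]
  simp [mul_comm]


lemma arith_combine (A B IFv IGv uy ux vx c0 mvv muv r1sv : ℝ)
    (hA : 0 < A) (hB : 0 < B) (hAB : A ≤ B)
    (f1 : uy * A ≤ IFv + c0 * A)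
    (f2 : (vx - ux) * B ≤ IGv - (IFv + c0 * B))
    (f3 : IGv ≤ (vx + mvv) * B)
    (f4 : 0 ≤ IFv) (f5 : IFv ≤ 2 * muv * B)
    (hkey : 2 * (B - A) ≤ 12 * r1sv * A)
    (hmu : 0 ≤ muv) (hr1s : 0 ≤ r1sv) :
    uy - ux ≤ mvv + 12 * muv * r1sv := by
  have e1 := mul_le_mul_of_nonneg_right f1 hB.le
  have e2 := mul_le_mul_of_nonneg_right f2 hA.le
  have e3 := mul_le_mul_of_nonneg_right f3 hA.le
  have hsum : (uy - ux) * (A * B) ≤ IFv * (B - A) + mvv * (A * B) := by linarith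
  have h1 : IFv * (B - A) ≤ (2 * muv * B) * (B - A) :=
    mul_le_mul_of_nonneg_right f5 (by linarith)
  have h2 : (2 * (B - A)) * (muv * B) ≤ (12 * r1sv * A) * (muv * B) :=
    mul_le_mul_of_nonneg_right hkey (by positivity)
  have herr : IFv * (B - A) ≤ 12 * muv * r1sv * (A * B) := by linarith
  have final : (uy - ux) * (A * B) ≤ (mvv + 12 * muv * r1sv) * (A * B) := by
    have : (mvv + 12 * muv * r1sv) * (A * B) = mvv * (A * B) + 12 * muv * r1sv * (A * B) := by
      ring
    linarith
  exact le_of_mul_le_mul_right final (by positivity)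

set_option maxHeartbeats 1000000 in
lemma key_estimate (k : ℕ) (u v : EuclideanSpace ℂ (Fin k) → ℝ)
    (hucont : ContinuousOn u (ball 0 3)) (hvcont : ContinuousOn v (ball 0 3))
    (hu : IsPshOn (ball 0 3) u) (hw : IsPshOn (ball 0 3) (v - u))
    (Mu Mv : ℝ)
    (hMu : ∀ p ∈ ball (0 : EuclideanSpace ℂ (Fin k)) 2, |u p| ≤ Mu)
    (hMv : ∀ p ∈ ball (0 : EuclideanSpace ℂ (Fin k)) 2, |v p| ≤ Mv)
    (s r : ℝ) (hs0 : 0 < s) (hs1 : s ≤ 1) (hr0 : 0 < r) (hr2 : r ≤ 1 / 2)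
    (x y : EuclideanSpace ℂ (Fin k)) (hx : x ∈ ball 0 1) (hy : y ∈ ball 0 1)
    (hxy : dist x y ≤ r) :
    u y - u x ≤ modCont (ball 0 2) v (r ^ s) + 12 * modCont (ball 0 2) u (r ^ s) * r ^ (1 - s) := by
  have hπ := Real.pi_pos
  have h02 : (0 : EuclideanSpace ℂ (Fin k)) ∈ ball (0 : EuclideanSpace ℂ (Fin k)) 2 := by
    simp
  set mu := modCont (ball (0 : EuclideanSpace ℂ (Fin k)) 2) u (r ^ s) with hmudef
  set mv := modCont (ball (0 : EuclideanSpace ℂ (Fin k)) 2) v (r ^ s) with hmvdef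
  have hρpos : 0 < r ^ s := Real.rpow_pos_of_pos hr0 s
  have hρle1 : r ^ s ≤ 1 := Real.rpow_le_one hr0.le (by linarith) hs0.le
  have hrρ : r ≤ r ^ s := by
    calc r = r ^ (1 : ℝ) := (Real.rpow_one r).symm
      _ ≤ r ^ s := Real.rpow_le_rpow_of_exponent_ge hr0 (by linarith) hs1
  have hmu0 : 0 ≤ mu := modCont_nonneg' hMu h02 hρpos.le
  have hmv0 : 0 ≤ mv := modCont_nonneg' hMv h02 hρpos.le
  set r1s := r ^ (1 - s) with hr1sdef
  have hr1spos : 0 < r1s := Real.rpow_pos_of_pos hr0 _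
  set Q := r ^ (s - 1) with hQdef
  have hQpos : 0 < Q := Real.rpow_pos_of_pos hr0 _
  have hQr1s : r1s * Q = 1 := by
    rw [hr1sdef, hQdef, ← Real.rpow_add hr0]
    norm_num
  have hQr : Q * r = r ^ s := by
    rw [hQdef]
    calc r ^ (s - 1) * r = r ^ (s - 1) * r ^ (1 : ℝ) := by rw [Real.rpow_one]
      _ = r ^ (s - 1 + 1) := (Real.rpow_add hr0 _ _).symm
      _ = r ^ s := by norm_num
  have hball12 : ball (0 : EuclideanSpace ℂ (Fin k)) 1 ⊆ ball 0 2 := ball_subset_ball (by norm_num)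
  have hball23 : ball (0 : EuclideanSpace ℂ (Fin k)) 2 ⊆ ball 0 3 := ball_subset_ball (by norm_num)
  have hx2 := hball12 hx
  have hy2 := hball12 hy
  by_cases hQ2 : 2 ≤ Q
  case neg =>
    -- trivial case : r^(1-s) > 1/2
    have h1 : 1 ≤ 2 * r1s := by nlinarith
    have habs : |u y - u x| ≤ mu := le_modCont hMu hy2 hx2 (by rw [dist_comm]; linarith)
    nlinarith [abs_le.mp habs]
  case pos =>
  set R := Q - 1 with hRdef
  have hR1 : 1 ≤ R := by simp [hRdef]; linarith
  have hRpos : 0 < R := by linarith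
  have hRQ : R + 1 = Q := by simp [hRdef]
  have hR2Q : Q ≤ 2 * R := by simp [hRdef]; linarith
  set b := y - x with hbdef
  have hbnorm : ‖b‖ ≤ r := by
    rw [hbdef, ← dist_eq_norm, dist_comm]
    exact hxy
  set ℓ : ℂ → EuclideanSpace ℂ (Fin k) := fun z => x + z • b with hℓdef
  have hcontℓ : Continuous ℓ := continuous_const.add (continuous_id.smul continuous_const)
  have hdom : ∀ z : ℂ, ‖z‖ ≤ Q → dist (ℓ z) x ≤ r ^ s ∧ ℓ z ∈ ball (0 : EuclideanSpace ℂ (Fin k)) 2 := by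
    intro z hz
    have hd : dist (ℓ z) x ≤ r ^ s := by
      rw [hℓdef]
      simp only [dist_eq_norm, add_sub_cancel_left]
      calc ‖z • b‖ = ‖z‖ * ‖b‖ := by rw [norm_smul]
        _ ≤ Q * r := mul_le_mul hz hbnorm (norm_nonneg _) hQpos.le
        _ = r ^ s := hQr
    refine ⟨hd, ?_⟩
    rw [mem_ball]
    calc dist (ℓ z) 0 ≤ dist (ℓ z) x + dist x 0 := dist_triangle _ _ _
      _ ≤ r ^ s + dist x 0 := by linarith
      _ < 1 + 1 := by
          have := mem_ball.mp hx
          linarith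
      _ = 2 := by norm_num
  set F : ℂ → ℝ := fun z => u (ℓ z) with hFdef
  set G : ℂ → ℝ := fun z => v (ℓ z) with hGdef
  set H : ℂ → ℝ := fun z => (v - u) (ℓ z) with hHdef
  have hFcont : ContinuousOn F (closedBall (0:ℂ) Q) := by
    apply hucont.comp hcontℓ.continuousOn
    intro z hz
    exact hball23 (hdom z (by rwa [← mem_closedBall_zero_iff])).2
  have hGcont : ContinuousOn G (closedBall (0:ℂ) Q) := by
    apply hvcont.comp hcontℓ.continuousOn
    intro z hz
    exact hball23 (hdom z (by rwa [← mem_closedBall_zero_iff])).2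
  have hHcont : ContinuousOn H (closedBall (0:ℂ) Q) := by
    have : ContinuousOn (v - u) (ball (0 : EuclideanSpace ℂ (Fin k)) 3) := hvcont.sub hucont
    apply this.comp hcontℓ.continuousOn
    intro z hz
    exact hball23 (hdom z (by rwa [← mem_closedBall_zero_iff])).2
  have hcbsub : closedBall (1:ℂ) R ⊆ closedBall (0:ℂ) Q := by
    apply closedBall_subset_closedBall'
    simp [hRQ.le]
  have hbsub : ball (1:ℂ) R ⊆ ball (0:ℂ) Q := by
    apply ball_subset_ball'
    simp [hRQ.le]
  have hFiQ : IntegrableOn F (ball (0:ℂ) Q) :=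
    (hFcont.integrableOn_compact (isCompact_closedBall _ _)).mono_set ball_subset_closedBall
  have hGiQ : IntegrableOn G (ball (0:ℂ) Q) :=
    (hGcont.integrableOn_compact (isCompact_closedBall _ _)).mono_set ball_subset_closedBall
  have hHiQ : IntegrableOn H (ball (0:ℂ) Q) :=
    (hHcont.integrableOn_compact (isCompact_closedBall _ _)).mono_set ball_subset_closedBall
  -- submean for u at center 1, radius R
  have hA : F 1 * (π * R ^ 2) ≤ ∫ z in ball (1:ℂ) R, F z := by
    apply submean_ball F 1 R hRpos (hFcont.mono hcbsub)
    intro t ht0 htR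
    apply hu x b 1 t ht0
    intro z hz
    have : ‖z‖ ≤ Q := by
      calc ‖z‖ = ‖z - 1 + 1‖ := by ring_nf
        _ ≤ ‖z - 1‖ + ‖(1:ℂ)‖ := norm_add_le _ _
        _ ≤ t + 1 := by rw [norm_one]; linarith
        _ ≤ Q := by linarith
    exact hball23 (hdom z this).2
  -- submean for v - u at center 0, radius Q
  have hB : H 0 * (π * Q ^ 2) ≤ ∫ z in ball (0:ℂ) Q, H z := by
    apply submean_ball H 0 Q hQpos hHcont
    intro t ht0 htQ
    apply hw x b 0 t ht0
    intro z hz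
    have : ‖z‖ ≤ Q := by simpa using le_trans hz htQ
    exact hball23 (hdom z this).2
  -- pointwise bounds
  have hFbound : ∀ z ∈ ball (0:ℂ) Q, |F z - u x| ≤ mu := by
    intro z hz
    have hz' : ‖z‖ ≤ Q := by
      rw [← mem_closedBall_zero_iff]
      exact ball_subset_closedBall hz
    exact le_modCont hMu (hdom z hz').2 hx2 (hdom z hz').1
  have hGbound : ∀ z ∈ ball (0:ℂ) Q, |G z - v x| ≤ mv := by
    intro z hz
    have hz' : ‖z‖ ≤ Q := by
      rw [← mem_closedBall_zero_iff]
      exact ball_subset_closedBall hz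
    exact le_modCont hMv (hdom z hz').2 hx2 (hdom z hz').1
  set c₀ := u x - mu with hc₀def
  set a := π * R ^ 2 with hadef
  set bq := π * Q ^ 2 with hbqdef
  have ha : 0 < a := by positivity
  have hbq : 0 < bq := by positivity
  have havol : (volume (ball (1:ℂ) R)).toReal = a := vol_ball_toReal _ _ hRpos.le
  have hbqvol : (volume (ball (0:ℂ) Q)).toReal = bq := vol_ball_toReal _ _ hQpos.le
  have hconst_int : ∀ (c : ℝ) (z₀ : ℂ) (t : ℝ), IntegrableOn (fun _ : ℂ => c) (ball z₀ t) :=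
    fun c z₀ t => integrableOn_const measure_ball_lt_top.ne
  have hFcInt : IntegrableOn (fun z => F z - c₀) (ball (0:ℂ) Q) := hFiQ.sub (hconst_int _ _ _)
  set IF := ∫ z in ball (0:ℂ) Q, (F z - c₀) with hIFdef
  set IG := ∫ z in ball (0:ℂ) Q, G z with hIGdef
  -- f4 : 0 ≤ IF
  have f4 : 0 ≤ IF := by
    apply setIntegral_nonneg measurableSet_ball
    intro z hz
    have := (abs_le.mp (hFbound z hz)).1
    simp only [hc₀def]
    linarith
  -- f5 : IF ≤ 2 * mu * bq
  have f5 : IF ≤ 2 * mu * bq := by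
    have : IF ≤ ∫ _ in ball (0:ℂ) Q, (2 * mu) := by
      apply setIntegral_mono_on hFcInt (hconst_int _ _ _) measurableSet_ball
      intro z hz
      have := (abs_le.mp (hFbound z hz)).2
      simp only [hc₀def]
      linarith
    rwa [setIntegral_const, measureReal_def, hbqvol, smul_eq_mul, mul_comm bq] at this
  -- f3 : IG ≤ (v x + mv) * bq
  have f3 : IG ≤ (v x + mv) * bq := by
    have : IG ≤ ∫ _ in ball (0:ℂ) Q, (v x + mv) := by
      apply setIntegral_mono_on hGiQ (hconst_int _ _ _) measurableSet_ball
      intro z hz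
      have := (abs_le.mp (hGbound z hz)).2
      linarith
    rwa [setIntegral_const, measureReal_def, hbqvol, smul_eq_mul, mul_comm bq] at this
  -- expansion of integrals of F - c₀
  have hexpQ : ∫ z in ball (0:ℂ) Q, F z = IF + c₀ * bq := by
    rw [hIFdef, integral_sub hFiQ (hconst_int _ _ _), setIntegral_const, measureReal_def, hbqvol, smul_eq_mul,
      mul_comm bq]
    ring
  -- f1 : u y * a ≤ IF + c₀ * a
  have f1 : u y * a ≤ IF + c₀ * a := by
    have hF1 : F 1 = u y := by
      rw [hFdef]
      simp only [hℓdef, one_smul, hbdef]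
      congr 1
      abel
    have hmono : ∫ z in ball (1:ℂ) R, (F z - c₀) ≤ IF := by
      apply setIntegral_mono_set hFcInt
      · apply (ae_restrict_iff' measurableSet_ball).mpr
        apply ae_of_all
        intro z hz
        have := (abs_le.mp (hFbound z hz)).1
        simp only [hc₀def, Pi.zero_apply]
        linarith
      · exact HasSubset.Subset.eventuallyLE hbsub
    have hexpR : ∫ z in ball (1:ℂ) R, (F z - c₀)
        = (∫ z in ball (1:ℂ) R, F z) - c₀ * a := by
      rw [integral_sub (hFiQ.mono_set hbsub) (hconst_int _ _ _), setIntegral_const, measureReal_def, havol,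
        smul_eq_mul, mul_comm a]
    have := hA
    rw [hF1] at this
    rw [hadef] at *
    linarith
  -- f2 : (v x - u x) * bq ≤ IG - (IF + c₀ * bq)
  have f2 : (v x - u x) * bq ≤ IG - (IF + c₀ * bq) := by
    have hH0 : H 0 = v x - u x := by
      rw [hHdef]
      simp only [hℓdef, zero_smul, add_zero, Pi.sub_apply]
    have hHsplit : ∫ z in ball (0:ℂ) Q, H z = IG - ∫ z in ball (0:ℂ) Q, F z := by
      have : ∀ z, H z = G z - F z := fun z => rfl
      simp_rw [this]
      rw [integral_sub hGiQ hFiQ]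
    have := hB
    rw [hH0, hHsplit, hexpQ] at this
    linarith
  -- error bound : 2 * (bq - a) ≤ 12 * r1s * a
  have hkey : 2 * (bq - a) ≤ 12 * r1s * a := by
    have h1 : bq - a = π * (Q ^ 2 - R ^ 2) := by rw [hadef, hbqdef]; ring
    have h2 : Q * (Q ^ 2 - R ^ 2) ≤ 6 * R ^ 2 := by
      rw [hRdef]
      nlinarith
    have h3 : r1s * (Q * (Q ^ 2 - R ^ 2)) ≤ r1s * (6 * R ^ 2) :=
      mul_le_mul_of_nonneg_left h2 hr1spos.le
    have h4 : Q ^ 2 - R ^ 2 ≤ 6 * r1s * R ^ 2 := by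
      have : r1s * (Q * (Q ^ 2 - R ^ 2)) = (r1s * Q) * (Q ^ 2 - R ^ 2) := by ring
      rw [this, hQr1s, one_mul] at h3
      linarith
    calc 2 * (bq - a) = 2 * π * (Q ^ 2 - R ^ 2) := by rw [h1]; ring
      _ ≤ 2 * π * (6 * r1s * R ^ 2) := by
          apply mul_le_mul_of_nonneg_left h4 (by positivity)
      _ = 12 * r1s * a := by rw [hadef]; ring
  have hAB : a ≤ bq := by
    rw [hadef, hbqdef]
    have hRQle : R ≤ Q := by linarith
    have hsq : R ^ 2 ≤ Q ^ 2 := by nlinarith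
    exact mul_le_mul_of_nonneg_left hsq hπ.le
  exact arith_combine a bq IF IG (u y) (u x) (v x) c₀ mv mu r1s ha hbq hAB f1 f2 f3 f4 f5 hkey
    hmu0 hr1spos.le

/-- Proposition 2.7 of the paper. If `u`, `v` and `v - u` are continuous
plurisubharmonic functions on `B(0,3) ⊆ ℂ^k` (encoding `dd^c u ≤ dd^c v`), then for `0 < s ≤ 1`
there is `A = A(k, s) > 0` such that for all `0 < r ≤ 1/2`:
`m_{B(0,1)}(u, r) ≤ m_{B(0,2)}(v, r^s) + A m_{B(0,2)}(u, r^s) r^{1-s}`, and in particular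
`m_{B(0,1)}(u, r) ≤ m_{B(0,2)}(v, r^s) + A Ω_{B(0,2)}(u) r^{1-s}`. -/
theorem stmt_1 (k : ℕ) (hk : 1 ≤ k) (s : ℝ) (hs0 : 0 < s) (hs1 : s ≤ 1) :
    ∃ A : ℝ, 0 < A ∧
      ∀ u v : EuclideanSpace ℂ (Fin k) → ℝ,
        ContinuousOn u (ball 0 3) → ContinuousOn v (ball 0 3) →
        IsPshOn (ball 0 3) u → IsPshOn (ball 0 3) v → IsPshOn (ball 0 3) (v - u) →
        ∀ r : ℝ, 0 < r → r ≤ 1 / 2 →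
          modCont (ball 0 1) u r ≤
              modCont (ball 0 2) v (r ^ s) +
                A * modCont (ball 0 2) u (r ^ s) * r ^ (1 - s) ∧
          modCont (ball 0 1) u r ≤
              modCont (ball 0 2) v (r ^ s) + A * oscOn (ball 0 2) u * r ^ (1 - s) := by
  refine ⟨12, by norm_num, ?_⟩
  intro u v hucont hvcont hu hv hw r hr0 hr2
  have hsub23 : closedBall (0 : EuclideanSpace ℂ (Fin k)) 2 ⊆ ball 0 3 :=
    closedBall_subset_ball (by norm_num)
  obtain ⟨Mu, hMu'⟩ := (isCompact_closedBall (0 : EuclideanSpace ℂ (Fin k)) 2).exists_bound_of_continuousOn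
    (hucont.mono hsub23)
  obtain ⟨Mv, hMv'⟩ := (isCompact_closedBall (0 : EuclideanSpace ℂ (Fin k)) 2).exists_bound_of_continuousOn
    (hvcont.mono hsub23)
  have hMu : ∀ p ∈ ball (0 : EuclideanSpace ℂ (Fin k)) 2, |u p| ≤ Mu := fun p hp => by
    simpa [Real.norm_eq_abs] using hMu' p (ball_subset_closedBall hp)
  have hMv : ∀ p ∈ ball (0 : EuclideanSpace ℂ (Fin k)) 2, |v p| ≤ Mv := fun p hp => by
    simpa [Real.norm_eq_abs] using hMv' p (ball_subset_closedBall hp)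
  have h01 : (0 : EuclideanSpace ℂ (Fin k)) ∈ ball (0 : EuclideanSpace ℂ (Fin k)) 1 :=
    mem_ball_self (by norm_num)
  have h02 : (0 : EuclideanSpace ℂ (Fin k)) ∈ ball (0 : EuclideanSpace ℂ (Fin k)) 2 :=
    mem_ball_self (by norm_num)
  have hρpos : 0 < r ^ s := Real.rpow_pos_of_pos hr0 s
  have hr1spos : 0 < r ^ (1 - s) := Real.rpow_pos_of_pos hr0 _
  have hfirst : modCont (ball 0 1) u r ≤
      modCont (ball 0 2) v (r ^ s) + 12 * modCont (ball 0 2) u (r ^ s) * r ^ (1 - s) := by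
    apply csSup_le
    · exact ⟨0, 0, h01, 0, h01, by simp [hr0.le], by simp⟩
    · rintro t ⟨x, hxm, y, hym, hdist, rfl⟩
      rw [abs_sub_le_iff]
      constructor
      · exact key_estimate k u v hucont hvcont hu hw Mu Mv hMu hMv s r hs0 hs1 hr0 hr2
          y x hym hxm (by rwa [dist_comm])
      · exact key_estimate k u v hucont hvcont hu hw Mu Mv hMu hMv s r hs0 hs1 hr0 hr2
          x y hxm hym hdist
  refine ⟨hfirst, hfirst.trans ?_⟩
  have hle : modCont (ball (0 : EuclideanSpace ℂ (Fin k)) 2) u (r ^ s)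
      ≤ oscOn (ball (0 : EuclideanSpace ℂ (Fin k)) 2) u :=
    modCont_le_oscOn hMu h02 hρpos.le
  have : 12 * modCont (ball (0 : EuclideanSpace ℂ (Fin k)) 2) u (r ^ s) * r ^ (1 - s)
      ≤ 12 * oscOn (ball (0 : EuclideanSpace ℂ (Fin k)) 2) u * r ^ (1 - s) := by
    apply mul_le_mul_of_nonneg_right _ hr1spos.le
    linarith
  linarith
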